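/- Let γ be a map from the vertices of ℤ² to the set of circles in ℝ^{4,2}, i.e. 3-dimensional subspaces γ_i ⊂ {p}^⊥ on which the form has signature (2,1). Suppose that to each edge (i,j) there is assigned a_{ij} ∈ ℝ^{4,2} with a_{ij} = a_{ji}, ⟨a_{ij},a_{ij}⟩ ≠ 0 and ⟨a_{ij},p⟩ = 0, such that the M-Lie inversion σ_{ij} := σ_{a_{ij}} maps γ_j onto γ_i, and such that for every elementary quadrilateral (i,j,k,l) of ℤ² the composition σ_{ij} ∘ σ_{jk} ∘ σ_{kl} ∘ σ_{li} is the identity of ℝ^{4,2} (a flat connection). Call a 2-dimensional totally isotropic subspace f orthogonal to the circle γ_i if f ∩ γ_i ≠ {0} and ⟨s, c + ⟨c,p⟩p⟩ = 0 for every s ∈ f and every lightlike c ∈ γ_i^⊥. Then for every vertex i₀ and every contact element f₀ orthogonal to γ_{i₀}, the parallel transport of f₀ by the maps σ along lattice paths is path-independent, and the resulting contact element f_i at each vertex i is orthogonal to γ_i. (Converse part of the theorem characterizing cyclic circle congruences: a flat connection of M-Lie inversions exchanging adjacent circles yields a family of orthogonal nets.) -/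

import Mathlib

noncomputable section

/-- The vector space ℝ^{4,2}, modeled as `Fin 6 → ℝ`. -/
abbrev R42 : Type := Fin 6 → ℝ

/-- The symmetric bilinear form of signature (4,2) on ℝ^{4,2}. -/
def bform : R42 →ₗ[ℝ] R42 →ₗ[ℝ] ℝ :=
  LinearMap.mk₂ ℝ
    (fun x y => x 0 * y 0 + x 1 * y 1 + x 2 * y 2 + x 3 * y 3 - x 4 * y 4 - x 5 * y 5)
    (fun x x' y => by simp only [Pi.add_apply]; ring)
    (fun c x y => by simp only [Pi.smul_apply, smul_eq_mul]; ring)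
    (fun x y y' => by simp only [Pi.add_apply]; ring)
    (fun c x y => by simp only [Pi.smul_apply, smul_eq_mul]; ring)

/-- A lightlike vector: nonzero and isotropic. Represents an oriented 2-sphere. -/
def IsLightlike (v : R42) : Prop := v ≠ 0 ∧ bform v v = 0

/-- The Lie inversion with respect to the linear sphere complex determined by `a`. -/
def lieInv (a r : R42) : R42 := r - (2 * bform r a / bform a a) • a

/-- The Lie inversion as a linear map. -/
def lieInvL (a : R42) : R42 →ₗ[ℝ] R42 :=
  LinearMap.id - (2 / bform a a) • LinearMap.smulRight (bform.flip a) a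

/-- A contact element: a 2-dimensional totally isotropic subspace. -/
def IsContactElement (f : Submodule ℝ R42) : Prop :=
  Module.finrank ℝ f = 2 ∧ ∀ u ∈ f, ∀ v ∈ f, bform u v = 0

/-- A circle: a 3-dimensional subspace of `{p}^⊥` on which the form has
signature (2,1), encoded by an orthogonal basis. -/
def IsCircle (p : R42) (γ : Submodule ℝ R42) : Prop :=
  (∀ v ∈ γ, bform v p = 0) ∧
  ∃ u v w : R42, γ = Submodule.span ℝ ({u, v, w} : Set R42) ∧
    bform u u = 1 ∧ bform v v = 1 ∧ bform w w = -1 ∧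
    bform u v = 0 ∧ bform u w = 0 ∧ bform v w = 0

/-- A contact element `f` is orthogonal to the circle `γ`: its point sphere lies on the
circle and all its spheres intersect every sphere through the circle orthogonally. -/
def OrthToCircle (p : R42) (γ f : Submodule ℝ R42) : Prop :=
  f ⊓ γ ≠ ⊥ ∧
  ∀ s ∈ f, ∀ c : R42, IsLightlike c → (∀ g ∈ γ, bform c g = 0) →
    bform s (c + bform c p • p) = 0

/-- Adjacency of vertices in the lattice ℤ². -/
def Adj (i j : ℤ × ℤ) : Prop :=
  (i.1 = j.1 ∧ (j.2 = i.2 + 1 ∨ i.2 = j.2 + 1)) ∨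
  (i.2 = j.2 ∧ (j.1 = i.1 + 1 ∨ i.1 = j.1 + 1))


lemma bform_comm (x y : R42) : bform x y = bform y x := by
  simp only [bform, LinearMap.mk₂_apply]; ring

lemma lieInvL_apply' (a x : R42) :
    lieInvL a x = x - ((2 / bform a a) * bform x a) • a := by
  simp [lieInvL, LinearMap.smulRight_apply, smul_smul]

lemma lieInvL_fixed (a v : R42) (h : bform v a = 0) : lieInvL a v = v := by
  rw [lieInvL_apply', h]; simp

lemma bform_lieInvL (a : R42) (ha : bform a a ≠ 0) (x y : R42) :
    bform (lieInvL a x) (lieInvL a y) = bform x y := by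
  simp only [lieInvL_apply', map_sub, map_smul, LinearMap.sub_apply,
    LinearMap.smul_apply, smul_eq_mul]
  field_simp
  rw [bform_comm a y]
  ring

lemma lieInvL_invol (a : R42) (ha : bform a a ≠ 0) (x : R42) :
    lieInvL a (lieInvL a x) = x := by
  simp only [lieInvL_apply', map_sub, map_smul, smul_eq_mul]
  match_scalars <;> field_simp <;> ring

lemma lieInvL_comp_self (a : R42) (ha : bform a a ≠ 0) :
    (lieInvL a).comp (lieInvL a) = LinearMap.id :=
  LinearMap.ext (lieInvL_invol a ha)

lemma adj_mk (x1 y1 x2 y2 : ℤ)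
    (h : (x1 = x2 ∧ (y2 = y1 + 1 ∨ y1 = y2 + 1)) ∨
      (y1 = y2 ∧ (x2 = x1 + 1 ∨ x1 = x2 + 1))) : Adj (x1, y1) (x2, y2) := h

lemma adj_symm {i j : ℤ × ℤ} (h : Adj i j) : Adj j i := by
  unfold Adj at h ⊢; omega

def walkN (F : ℤ → (R42 →ₗ[ℝ] R42)) : ℕ → (R42 →ₗ[ℝ] R42)
  | 0 => LinearMap.id
  | n+1 => (F n).comp (walkN F n)

def walkM (B : ℤ → (R42 →ₗ[ℝ] R42)) : ℕ → (R42 →ₗ[ℝ] R42)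
  | 0 => LinearMap.id
  | n+1 => (B (-((n : ℤ)+1))).comp (walkM B n)

def walk (F B : ℤ → (R42 →ₗ[ℝ] R42)) (t : ℤ) : R42 →ₗ[ℝ] R42 :=
  if 0 ≤ t then walkN F t.toNat else walkM B (-t).toNat

lemma walk_zero (F B : ℤ → (R42 →ₗ[ℝ] R42)) : walk F B 0 = LinearMap.id := by
  simp [walk, walkN]

lemma walk_step (F B : ℤ → (R42 →ₗ[ℝ] R42))
    (hinv : ∀ t, (F t).comp (B t) = LinearMap.id) (t : ℤ) :
    walk F B (t + 1) = (F t).comp (walk F B t) := by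
  rcases le_or_gt 0 t with h | h
  · have h1 : (0:ℤ) ≤ t + 1 := by omega
    have h2 : (t + 1).toNat = t.toNat + 1 := by omega
    have h3 : (t.toNat : ℤ) = t := by omega
    rw [walk, walk, if_pos h1, if_pos h, h2]
    show (F t.toNat).comp (walkN F t.toNat) = _
    rw [h3]
  · rcases eq_or_lt_of_le (show t ≤ -1 by omega) with h1 | h1
    · subst h1
      have e0 : walk F B (-1 + 1) = LinearMap.id := by norm_num [walk, walkN]
      have e1 : walk F B (-1) = B (-1) := by norm_num [walk, walkM]
      rw [e0, e1, hinv]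
    · have h2 : ¬ (0:ℤ) ≤ t + 1 := by omega
      have h3 : ¬ (0:ℤ) ≤ t := by omega
      have h4 : (-t).toNat = (-(t+1)).toNat + 1 := by omega
      rw [walk, walk, if_neg h2, if_neg h3, h4]
      show _ = (F t).comp ((B (-(((-(t+1)).toNat : ℤ) + 1))).comp (walkM B (-(t+1)).toNat))
      have h5 : -(((-(t+1)).toNat : ℤ) + 1) = t := by omega
      rw [h5, ← LinearMap.comp_assoc, hinv, LinearMap.id_comp]

lemma lattice_ind (P : ℤ × ℤ → Prop) (i₀ : ℤ × ℤ) (h0 : P i₀)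
    (hstep : ∀ i j, Adj i j → P j → P i) : ∀ i, P i := by
  have row : ∀ d : ℤ, P (i₀.1 + d, i₀.2) := by
    intro d
    induction d using Int.induction_on with
    | zero => simpa using h0
    | succ k ih =>
        exact hstep _ _ (adj_mk _ _ _ _ (by omega)) ih
    | pred k ih =>
        exact hstep _ _ (adj_mk _ _ _ _ (by omega)) ih
  have col : ∀ x : ℤ, ∀ e : ℤ, P (x, i₀.2 + e) := by
    intro x e
    induction e using Int.induction_on with
    | zero =>
        have := row (x - i₀.1)
        simpa using this
    | succ k ih => exact hstep _ _ (adj_mk _ _ _ _ (by omega)) ih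
    | pred k ih => exact hstep _ _ (adj_mk _ _ _ _ (by omega)) ih
  intro i
  have := col i.1 (i.2 - i₀.2)
  simpa using this

lemma orth_transport (p a : R42) (ha : bform a a ≠ 0) (hap : bform a p = 0)
    (γ' γ f : Submodule ℝ R42) (hγ : Submodule.map (lieInvL a) γ' = γ)
    (ho : OrthToCircle p γ' f) :
    OrthToCircle p γ (Submodule.map (lieInvL a) f) := by
  obtain ⟨hne, horth⟩ := ho
  have hinj : Function.Injective (lieInvL a) := fun u v huv => by
    have h2 := congrArg (lieInvL a) huv
    rwa [lieInvL_invol a ha, lieInvL_invol a ha] at h2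
  have hiso : ∀ u v, bform (lieInvL a u) (lieInvL a v) = bform u v := bform_lieInvL a ha
  have hpfix : lieInvL a p = p := lieInvL_fixed a p (by rw [bform_comm]; exact hap)
  constructor
  · obtain ⟨v, hv, hv0⟩ := (Submodule.ne_bot_iff _).mp hne
    refine (Submodule.ne_bot_iff _).mpr ⟨lieInvL a v, ?_, ?_⟩
    · refine Submodule.mem_inf.mpr ⟨Submodule.mem_map_of_mem (Submodule.mem_inf.mp hv).1, ?_⟩
      rw [← hγ]
      exact Submodule.mem_map_of_mem (Submodule.mem_inf.mp hv).2
    · intro h0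
      exact hv0 (hinj (by rw [h0, map_zero]))
  · rintro s' hs' c hc hcγ
    obtain ⟨s, hs, rfl⟩ := hs'
    have hcl : IsLightlike (lieInvL a c) := by
      refine ⟨fun h0 => hc.1 (hinj (by rw [h0, map_zero])), ?_⟩
      rw [hiso]; exact hc.2
    have hcγ' : ∀ g ∈ γ', bform (lieInvL a c) g = 0 := by
      intro g hg
      have hgm : lieInvL a g ∈ γ := by rw [← hγ]; exact Submodule.mem_map_of_mem hg
      calc bform (lieInvL a c) g
          = bform (lieInvL a c) (lieInvL a (lieInvL a g)) := by rw [lieInvL_invol a ha]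
        _ = bform c (lieInvL a g) := hiso _ _
        _ = 0 := hcγ _ hgm
    have h0 := horth s hs (lieInvL a c) hcl hcγ'
    have e1 : bform (lieInvL a s) c = bform s (lieInvL a c) := by
      conv_lhs => rw [← lieInvL_invol a ha c]
      exact hiso _ _
    have e2 : bform (lieInvL a s) p = bform s p := by
      conv_lhs => rw [← hpfix]
      exact hiso _ _
    have e3 : bform c p = bform (lieInvL a c) p := by
      conv_lhs => rw [← lieInvL_invol a ha c, ← hpfix]
      exact hiso _ _
    have expand : ∀ u v : R42, ∀ t : ℝ,
        bform u (v + t • p) = bform u v + t * bform u p := fun u v t => by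
      rw [map_add, map_smul, smul_eq_mul]
    rw [expand, e1, e2, e3, ← expand]
    exact h0

/-- A flat connection of M-Lie inversions exchanging adjacent circles
of a discrete circle congruence yields, from any initial orthogonal contact element,
a path-independent parallel transport whose resulting contact elements are orthogonal
to the circles: the congruence is cyclic. -/
theorem stmt_17 (p : R42) (hp : bform p p = -1)
    (γ : ℤ × ℤ → Submodule ℝ R42)
    (hγ : ∀ i, IsCircle p (γ i))
    (a : ℤ × ℤ → ℤ × ℤ → R42)
    (hsym : ∀ i j, Adj i j → a i j = a j i)
    (hnn : ∀ i j, Adj i j → bform (a i j) (a i j) ≠ 0)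
    (hap : ∀ i j, Adj i j → bform (a i j) p = 0)
    (hmap : ∀ i j, Adj i j → Submodule.map (lieInvL (a i j)) (γ j) = γ i)
    (hflat : ∀ x y : ℤ, ∀ v : R42,
      lieInvL (a (x, y) (x + 1, y))
        (lieInvL (a (x + 1, y) (x + 1, y + 1))
          (lieInvL (a (x + 1, y + 1) (x, y + 1))
            (lieInvL (a (x, y + 1) (x, y)) v))) = v)
    (i₀ : ℤ × ℤ) (f₀ : Submodule ℝ R42)
    (hf₀ : IsContactElement f₀) (horth₀ : OrthToCircle p (γ i₀) f₀) :
    ∃ f : ℤ × ℤ → Submodule ℝ R42,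
      f i₀ = f₀ ∧
      (∀ i j, Adj i j → Submodule.map (lieInvL (a i j)) (f j) = f i) ∧
      (∀ i, OrthToCircle p (γ i) (f i)) ∧
      ∀ g : ℤ × ℤ → Submodule ℝ R42,
        g i₀ = f₀ → (∀ i j, Adj i j → Submodule.map (lieInvL (a i j)) (g j) = g i) →
        g = f := by
  have hself : ∀ i j, Adj i j →
      (lieInvL (a i j)).comp (lieInvL (a i j)) = LinearMap.id :=
    fun i j h => lieInvL_comp_self _ (hnn i j h)
  have hσσ : ∀ i j, Adj i j →
      (lieInvL (a i j)).comp (lieInvL (a j i)) = LinearMap.id := by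
    intro i j h
    rw [hsym j i (adj_symm h)]
    exact hself i j h
  have hflat' : ∀ x y : ℤ,
      (lieInvL (a (x+1, y+1) (x, y+1))).comp (lieInvL (a (x, y+1) (x, y))) =
      (lieInvL (a (x+1, y+1) (x+1, y))).comp (lieInvL (a (x+1, y) (x, y))) := by
    intro x y
    apply LinearMap.ext; intro v
    have h := hflat x y v
    have hs1 : a (x+1, y) (x, y) = a (x, y) (x+1, y) :=
      hsym _ _ (adj_mk _ _ _ _ (by omega))
    have hs2 : a (x+1, y+1) (x+1, y) = a (x+1, y) (x+1, y+1) :=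
      hsym _ _ (adj_mk _ _ _ _ (by omega))
    have i1 := lieInvL_invol (a (x, y) (x+1, y)) (hnn _ _ (adj_mk x y (x+1) y (by omega)))
    have i2 := lieInvL_invol (a (x+1, y) (x+1, y+1)) (hnn _ _ (adj_mk _ _ _ _ (by omega)))
    simp only [LinearMap.comp_apply]
    rw [hs1, hs2]
    calc lieInvL (a (x+1,y+1) (x,y+1)) (lieInvL (a (x,y+1) (x,y)) v)
        = lieInvL (a (x+1,y) (x+1,y+1)) (lieInvL (a (x,y) (x+1,y))
            (lieInvL (a (x,y) (x+1,y)) (lieInvL (a (x+1,y) (x+1,y+1))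
              (lieInvL (a (x+1,y+1) (x,y+1)) (lieInvL (a (x,y+1) (x,y)) v))))) := by
          rw [i1, i2]
      _ = lieInvL (a (x+1,y) (x+1,y+1)) (lieInvL (a (x,y) (x+1,y)) v) := by rw [h]
  -- transport maps
  let Fh : ℤ → (R42 →ₗ[ℝ] R42) := fun t => lieInvL (a (i₀.1 + t + 1, i₀.2) (i₀.1 + t, i₀.2))
  let Bh : ℤ → (R42 →ₗ[ℝ] R42) := fun t => lieInvL (a (i₀.1 + t, i₀.2) (i₀.1 + t + 1, i₀.2))
  let Fv : ℤ → ℤ → (R42 →ₗ[ℝ] R42) := fun x t => lieInvL (a (x, i₀.2 + t + 1) (x, i₀.2 + t))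
  let Bv : ℤ → ℤ → (R42 →ₗ[ℝ] R42) := fun x t => lieInvL (a (x, i₀.2 + t) (x, i₀.2 + t + 1))
  let T : ℤ × ℤ → (R42 →ₗ[ℝ] R42) := fun i =>
    (walk (Fv i.1) (Bv i.1) (i.2 - i₀.2)).comp (walk Fh Bh (i.1 - i₀.1))
  let f : ℤ × ℤ → Submodule ℝ R42 := fun i => Submodule.map (T i) f₀
  have hinvH : ∀ t, (Fh t).comp (Bh t) = LinearMap.id := fun t =>
    hσσ _ _ (adj_mk _ _ _ _ (by omega))
  have hinvV : ∀ x t, (Fv x t).comp (Bv x t) = LinearMap.id := fun x t =>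
    hσσ _ _ (adj_mk _ _ _ _ (by omega))
  have stepV : ∀ x y : ℤ, T (x, y + 1) = (lieInvL (a (x, y+1) (x, y))).comp (T (x, y)) := by
    intro x y
    show (walk (Fv x) (Bv x) (y + 1 - i₀.2)).comp (walk Fh Bh (x - i₀.1)) = _
    rw [show y + 1 - i₀.2 = (y - i₀.2) + 1 from by ring,
      walk_step (Fv x) (Bv x) (hinvV x) (y - i₀.2)]
    have e : Fv x (y - i₀.2) = lieInvL (a (x, y+1) (x, y)) := by
      show lieInvL (a (x, i₀.2 + (y - i₀.2) + 1) (x, i₀.2 + (y - i₀.2))) = _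
      rw [show i₀.2 + (y - i₀.2) = y from by ring]
    rw [e, LinearMap.comp_assoc]
  have stepV' : ∀ x y : ℤ, T (x, y) = (lieInvL (a (x, y+1) (x, y))).comp (T (x, y + 1)) := by
    intro x y
    rw [stepV x y, ← LinearMap.comp_assoc,
      hself (x, y+1) (x, y) (adj_mk _ _ _ _ (by omega)), LinearMap.id_comp]
  have stepH : ∀ y x : ℤ, T (x + 1, y) = (lieInvL (a (x+1, y) (x, y))).comp (T (x, y)) := by
    have base : ∀ x : ℤ, T (x + 1, i₀.2) =
        (lieInvL (a (x+1, i₀.2) (x, i₀.2))).comp (T (x, i₀.2)) := by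
      intro x
      show (walk (Fv (x+1)) (Bv (x+1)) (i₀.2 - i₀.2)).comp (walk Fh Bh (x + 1 - i₀.1)) = _
      rw [sub_self, walk_zero, LinearMap.id_comp,
        show x + 1 - i₀.1 = (x - i₀.1) + 1 from by ring,
        walk_step Fh Bh hinvH (x - i₀.1)]
      have e : Fh (x - i₀.1) = lieInvL (a (x+1, i₀.2) (x, i₀.2)) := by
        show lieInvL (a (i₀.1 + (x - i₀.1) + 1, i₀.2) (i₀.1 + (x - i₀.1), i₀.2)) = _
        rw [show i₀.1 + (x - i₀.1) = x from by ring]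
      rw [e]
      congr 1
      show _ = (walk (Fv x) (Bv x) (i₀.2 - i₀.2)).comp (walk Fh Bh (x - i₀.1))
      rw [sub_self, walk_zero, LinearMap.id_comp]
    have main : ∀ d : ℤ, ∀ x : ℤ, T (x + 1, i₀.2 + d) =
        (lieInvL (a (x+1, i₀.2 + d) (x, i₀.2 + d))).comp (T (x, i₀.2 + d)) := by
      intro d
      induction d using Int.induction_on with
      | zero => simpa using base
      | succ k ih =>
          intro x
          rw [show i₀.2 + ((k:ℤ) + 1) = (i₀.2 + (k:ℤ)) + 1 from by ring]
          rw [stepV (x+1) (i₀.2 + (k:ℤ)), ih x, stepV x (i₀.2 + (k:ℤ))]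
          apply LinearMap.ext; intro v
          simp only [LinearMap.comp_apply]
          have h1 := LinearMap.congr_fun (hflat' x (i₀.2 + (k:ℤ))) (T (x, i₀.2 + (k:ℤ)) v)
          simp only [LinearMap.comp_apply] at h1
          exact h1.symm
      | pred k ih =>
          intro x
          set y' : ℤ := i₀.2 + (-(k:ℤ) - 1) with hy'
          have ih' : T (x+1, y' + 1) =
              (lieInvL (a (x+1, y'+1) (x, y'+1))).comp (T (x, y'+1)) := by
            have hy1 : y' + 1 = i₀.2 + (-(k:ℤ)) := by rw [hy']; ring
            rw [hy1]; exact ih x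
          rw [stepV' (x+1) y', stepV' x y', ih']
          apply LinearMap.ext; intro v
          simp only [LinearMap.comp_apply]
          have h1 := LinearMap.congr_fun (hflat' x y')
            (lieInvL (a (x, y'+1) (x, y')) (T (x, y'+1) v))
          simp only [LinearMap.comp_apply] at h1
          rw [lieInvL_invol _ (hnn _ _ (adj_mk x (y'+1) x y' (by omega)))] at h1
          rw [h1, lieInvL_invol _ (hnn _ _ (adj_mk (x+1) (y'+1) (x+1) y' (by omega)))]
    intro y x
    have := main (y - i₀.2) x
    rw [show i₀.2 + (y - i₀.2) = y from by ring] at this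
    exact this
  have hT0 : T i₀ = LinearMap.id := by
    show (walk (Fv i₀.1) (Bv i₀.1) (i₀.2 - i₀.2)).comp (walk Fh Bh (i₀.1 - i₀.1)) = _
    rw [sub_self, sub_self, walk_zero, walk_zero, LinearMap.id_comp]
  have hfi₀ : f i₀ = f₀ := by
    show Submodule.map (T i₀) f₀ = f₀
    rw [hT0, Submodule.map_id]
  have hedge : ∀ i j, Adj i j → Submodule.map (lieInvL (a i j)) (f j) = f i := by
    have hfwd : ∀ i' j', T i' = (lieInvL (a i' j')).comp (T j') →
        Submodule.map (lieInvL (a i' j')) (f j') = f i' := by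
      intro i' j' h
      show Submodule.map (lieInvL (a i' j')) (Submodule.map (T j') f₀) =
        Submodule.map (T i') f₀
      rw [← Submodule.map_comp, ← h]
    have hbwd : ∀ i' j', Adj i' j' → T j' = (lieInvL (a j' i')).comp (T i') →
        Submodule.map (lieInvL (a i' j')) (f j') = f i' := by
      intro i' j' hadj' h
      show Submodule.map (lieInvL (a i' j')) (Submodule.map (T j') f₀) =
        Submodule.map (T i') f₀
      rw [← Submodule.map_comp, h, ← LinearMap.comp_assoc, hσσ i' j' hadj',
        LinearMap.id_comp]
    intro i j hadj
    obtain ⟨ix, iy⟩ := i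
    obtain ⟨jx, jy⟩ := j
    rcases hadj with ⟨h1, h2 | h2⟩ | ⟨h1, h2 | h2⟩
    · obtain rfl : ix = jx := h1
      obtain rfl : jy = iy + 1 := h2
      exact hbwd _ _ (Or.inl ⟨rfl, Or.inl rfl⟩) (stepV _ _)
    · obtain rfl : ix = jx := h1
      obtain rfl : iy = jy + 1 := h2
      exact hfwd _ _ (stepV _ _)
    · obtain rfl : iy = jy := h1
      obtain rfl : jx = ix + 1 := h2
      exact hbwd _ _ (Or.inr ⟨rfl, Or.inl rfl⟩) (stepH _ _)
    · obtain rfl : iy = jy := h1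
      obtain rfl : ix = jx + 1 := h2
      exact hfwd _ _ (stepH _ _)
  have horth : ∀ i, OrthToCircle p (γ i) (f i) := by
    refine lattice_ind (fun i => OrthToCircle p (γ i) (f i)) i₀ ?_ ?_
    · show OrthToCircle p (γ i₀) (f i₀)
      rw [hfi₀]; exact horth₀
    · intro i j hadj hj'
      have hj : OrthToCircle p (γ j) (f j) := hj'
      show OrthToCircle p (γ i) (f i)
      rw [← hedge i j hadj]
      exact orth_transport p (a i j) (hnn i j hadj) (hap i j hadj) (γ j) (γ i) (f j)
        (hmap i j hadj) hj
  refine ⟨f, hfi₀, hedge, horth, ?_⟩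
  intro g hg0 hgedge
  funext i
  refine lattice_ind (fun i => g i = f i) i₀ ?_ ?_ i
  · show g i₀ = f i₀
    rw [hg0, hfi₀]
  · intro i' j' hadj hj'
    have hj : g j' = f j' := hj'
    show g i' = f i'
    rw [← hgedge i' j' hadj, hj, hedge i' j' hadj]
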